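/- For every pair of relatively prime integers p, q ≥ 2, the torus knot group ⟨a, b ∣ aᵖ = b^q⟩, i.e. the presented group on two generators a, b with the single relator aᵖb^{−q}, is not bi-orderable: it admits no strict linear order invariant under both left and right multiplication. -/

import Mathlib

/-- A group is bi-orderable if it admits a strict linear order invariant under
both left and right multiplication. -/
def BiOrderable (G : Type*) [Group G] : Prop :=
  ∃ r : G → G → Prop, IsStrictTotalOrder G r ∧
    (∀ f g h : G, r g h → r (f * g) (f * h)) ∧
    (∀ f g h : G, r g h → r (g * f) (h * f))

/-- The torus knot group `⟨a, b ∣ aᵖ = b^q⟩`, presented on two generators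
`a = of true`, `b = of false` with single relator `aᵖ b^{-q}`. -/
def torusKnotGroup (p q : ℕ) : Type :=
  PresentedGroup
    ({FreeGroup.of true ^ p * (FreeGroup.of false ^ q)⁻¹} : Set (FreeGroup Bool))

instance (p q : ℕ) : Group (torusKnotGroup p q) := by
  unfold torusKnotGroup; infer_instance

namespace TorusKnotAux

open Fin.NatCast Fin.CommRing in
lemma finRotate_pow_apply (n k : ℕ) (i : Fin (n + 1)) :
    ((finRotate (n + 1)) ^ k) i = i + (k : Fin (n + 1)) := by
  induction k with
  | zero => simp
  | succ k ih =>
      rw [pow_succ', Equiv.Perm.mul_apply, finRotate_succ_apply, ih]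
      push_cast
      ring

open Fin.NatCast in
lemma finRotate_pow_self (n : ℕ) : (finRotate (n + 1)) ^ (n + 1) = 1 := by
  ext i
  rw [finRotate_pow_apply]
  simp [Fin.natCast_self]

variable (p q : ℕ)

/-- Equivalence of `Fin q` with the naturals in `[p-1, p-1+q)`. -/
def eB : Fin q ≃ { n : ℕ // p - 1 ≤ n ∧ n < p - 1 + q } where
  toFun i := ⟨p - 1 + i, ⟨Nat.le_add_right _ _, by omega⟩⟩
  invFun n := ⟨n.1 - (p - 1), by omega⟩
  left_inv i := by ext; simp
  right_inv n := by ext; simp; omega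

/-- The permutation `a` of ℕ: rotates `{0, …, p-1}`. -/
def permA : Equiv.Perm ℕ :=
  (finRotate p).extendDomain (Fin.equivSubtype (n := p))

/-- The permutation `b` of ℕ: rotates `{p-1, …, p-1+q-1}`. -/
def permB : Equiv.Perm ℕ :=
  (finRotate q).extendDomain (eB p q)

lemma permA_pow (hp : 2 ≤ p) : permA p ^ p = 1 := by
  obtain ⟨n, rfl⟩ : ∃ n, p = n + 1 := ⟨p - 1, by omega⟩
  rw [permA, ← Equiv.Perm.extendDomain_pow, finRotate_pow_self,
    Equiv.Perm.extendDomain_one]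

lemma permB_pow (hq : 2 ≤ q) : permB p q ^ q = 1 := by
  obtain ⟨n, rfl⟩ : ∃ n, q = n + 1 := ⟨q - 1, by omega⟩
  rw [permB, ← Equiv.Perm.extendDomain_pow, finRotate_pow_self,
    Equiv.Perm.extendDomain_one]

lemma permA_pred (hp : 2 ≤ p) : permA p (p - 1) = 0 := by
  obtain ⟨n, rfl⟩ : ∃ n, p = n + 1 := ⟨p - 1, by omega⟩
  have h : n + 1 - 1 < n + 1 := by omega
  have key := Equiv.Perm.extendDomain_apply_subtype (finRotate (n + 1))
    (Fin.equivSubtype (n := n + 1)) (b := n + 1 - 1) h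
  rw [permA, key]
  have h0 : (Fin.equivSubtype.symm ⟨n + 1 - 1, h⟩ : Fin (n + 1)) = Fin.last n := by
    ext; simp
  rw [h0, finRotate_last]
  simp

lemma permA_self : permA p p = p :=
  Equiv.Perm.extendDomain_apply_not_subtype _ _ (lt_irrefl p)

lemma permB_pred (hp : 2 ≤ p) (hq : 2 ≤ q) : permB p q (p - 1) = p := by
  obtain ⟨m, rfl⟩ : ∃ m, q = m + 2 := ⟨q - 2, by omega⟩
  have h : p - 1 ≤ p - 1 ∧ p - 1 < p - 1 + (m + 2) := ⟨le_refl _, by omega⟩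
  have key := Equiv.Perm.extendDomain_apply_subtype (finRotate (m + 2))
    (eB p (m + 2)) (b := p - 1) h
  rw [permB, key]
  have h0 : (eB p (m + 2)).symm ⟨p - 1, h⟩ = (0 : Fin (m + 2)) := by
    ext; simp [eB]
  rw [h0]
  have h1 : finRotate (m + 2) 0 = (1 : Fin (m + 2)) := by
    rw [finRotate_succ_apply, zero_add]
  rw [h1]
  show p - 1 + ((1 : Fin (m + 2)) : ℕ) = p
  have h2 : ((1 : Fin (m + 2)) : ℕ) = 1 := by simp [Fin.val_one]
  omega

lemma permB_zero (hp : 2 ≤ p) : permB p q 0 = 0 := by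
  refine Equiv.Perm.extendDomain_apply_not_subtype _ _ ?_
  simp only [not_and, not_lt]
  omega

lemma perm_not_comm (hp : 2 ≤ p) (hq : 2 ≤ q) :
    permA p * permB p q ≠ permB p q * permA p := by
  intro h
  have h1 : (permA p * permB p q) (p - 1) = p := by
    rw [Equiv.Perm.mul_apply, permB_pred p q hp hq, permA_self]
  have h2 : (permB p q * permA p) (p - 1) = 0 := by
    rw [Equiv.Perm.mul_apply, permA_pred p hp, permB_zero p q hp]
  rw [h] at h1
  rw [h1] at h2
  omega

/-- The map sending the generators to the two permutations. -/
def genMap : Bool → Equiv.Perm ℕ := fun x => cond x (permA p) (permB p q)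

lemma relator_maps (hp : 2 ≤ p) (hq : 2 ≤ q) :
    ∀ r ∈ ({FreeGroup.of true ^ p * (FreeGroup.of false ^ q)⁻¹} :
      Set (FreeGroup Bool)), FreeGroup.lift (genMap p q) r = 1 := by
  intro r hr
  rw [Set.mem_singleton_iff] at hr
  subst hr
  rw [map_mul, map_pow, map_inv, map_pow, FreeGroup.lift_apply_of, FreeGroup.lift_apply_of]
  show permA p ^ p * (permB p q ^ q)⁻¹ = 1
  rw [permA_pow p hp, permB_pow p q hq, inv_one, mul_one]

/-- The generators of the torus knot group do not commute. -/
lemma gens_not_comm (hp : 2 ≤ p) (hq : 2 ≤ q) :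
    (PresentedGroup.of true : torusKnotGroup p q) * PresentedGroup.of false ≠
      PresentedGroup.of false * PresentedGroup.of true := by
  intro h
  have h1 := congrArg (PresentedGroup.toGroup (relator_maps p q hp hq)) h
  rw [map_mul, map_mul, PresentedGroup.toGroup.of, PresentedGroup.toGroup.of] at h1
  exact perm_not_comm p q hp hq h1

/-- The defining relation in the torus knot group. -/
lemma relation :
    (PresentedGroup.of true : torusKnotGroup p q) ^ p =
      (PresentedGroup.of false : torusKnotGroup p q) ^ q := by
  have h : (PresentedGroup.mk _ (FreeGroup.of true ^ p * (FreeGroup.of false ^ q)⁻¹) :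
      torusKnotGroup p q) = 1 := by
    apply (QuotientGroup.eq_one_iff _).mpr
    exact Subgroup.subset_normalClosure rfl
  rw [map_mul, map_inv, map_pow, map_pow] at h
  have h2 := mul_eq_one_iff_eq_inv.mp h
  rw [inv_inv] at h2
  exact h2

end TorusKnotAux

/-- for relatively prime `p, q ≥ 2`, the torus knot group
`⟨a, b ∣ aᵖ = b^q⟩` is not bi-orderable. -/
theorem torusKnotGroup_not_biOrderable (p q : ℕ) (hp : 2 ≤ p) (hq : 2 ≤ q)
    (hpq : Nat.Coprime p q) : ¬ BiOrderable (torusKnotGroup p q) := by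
  rintro ⟨r, hsto, hl, hr⟩
  have htri : ∀ a b : torusKnotGroup p q, r a b ∨ a = b ∨ r b a := by
    haveI := hsto; exact trichotomous
  have hirr := hsto.toIsStrictOrder.toIrrefl.irrefl
  have htr : ∀ a b c : torusKnotGroup p q, r a b → r b c → r a c :=
    hsto.toIsStrictOrder.toIsTrans.trans
  -- powers preserve the order
  have hpow : ∀ (n : ℕ) (x y : torusKnotGroup p q),
      r x y → r (x ^ (n + 1)) (y ^ (n + 1)) := by
    intro n
    induction n with
    | zero => intro x y h; simpa using h
    | succ n ih =>
        intro x y hxy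
        have h2 := ih x y hxy
        have h3 := hl (x ^ (n + 1)) x y hxy
        have h4 := hr y (x ^ (n + 1)) (y ^ (n + 1)) h2
        rw [← pow_succ] at h3 h4
        exact htr _ _ _ h3 h4
  -- unique p-th roots
  have hp1 : p - 1 + 1 = p := by omega
  have hroots : ∀ x y : torusKnotGroup p q, x ^ p = y ^ p → x = y := by
    intro x y hxy
    rcases htri x y with h | h | h
    · exfalso
      have := hpow (p - 1) x y h
      rw [hp1, hxy] at this
      exact hirr _ this
    · exact h
    · exfalso
      have := hpow (p - 1) y x h
      rw [hp1, hxy] at this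
      exact hirr _ this
  set α : torusKnotGroup p q := PresentedGroup.of true with hα
  set β : torusKnotGroup p q := PresentedGroup.of false with hβ
  have hrel : α ^ p = β ^ q := TorusKnotAux.relation p q
  have hconj : (β * α * β⁻¹) ^ p = α ^ p := by
    rw [conj_pow, hrel]
    group
  have h5 : β * α * β⁻¹ = α := hroots _ _ hconj
  have h6 : β * α = α * β := by
    rw [mul_inv_eq_iff_eq_mul] at h5
    exact h5
  exact TorusKnotAux.gens_not_comm p q hp hq h6.symm
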